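/- If a rooted tree T contains a subset order-isomorphic to the full binary tree 2^{<ω}, then the ray space R(T) contains a topological copy of the Cantor space 2^ω. In particular, the map sending f ∈ 2^ω to the ray generated by the images of its initial segments is a topological embedding of 2^ω into R(T). -/

import Mathlib

open Set Topology

/-- An order-theoretic tree: every set of predecessors is a well-ordered chain. -/
def IsOrderTree (T : Type*) [PartialOrder T] : Prop :=
  ∀ t : T, (Set.Iio t).IsWF ∧ IsChain (· ≤ ·) (Set.Iio t)

/-- A ray: a nonempty, downward closed chain with no maximal element. -/
def IsRay {T : Type*} [PartialOrder T] (R : Set T) : Prop :=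
  R.Nonempty ∧ IsChain (· ≤ ·) R ∧ (∀ x ∈ R, ∀ y, y ≤ x → y ∈ R) ∧
    ∀ x ∈ R, ∃ y ∈ R, x < y

/-- The ray space of a tree. -/
def RaySpace (T : Type*) [PartialOrder T] := {R : Set T // IsRay R}

/-- The topology on the ray space, inherited from the product topology on `2^T`:
subbasic open sets are `[t] = {R : t ∈ R}` and their complements. -/
instance {T : Type*} [PartialOrder T] : TopologicalSpace (RaySpace T) :=
  TopologicalSpace.generateFrom
    {U | ∃ t : T, U = {R : RaySpace T | t ∈ R.val} ∨ U = {R : RaySpace T | t ∉ R.val}}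

/- ### Auxiliary lemmas -/

/-- The initial segment of length `n` of `f`. -/
private def seg (f : ℕ → Bool) (n : ℕ) : List Bool := List.ofFn fun i : Fin n => f i

private lemma seg_length (f : ℕ → Bool) (n : ℕ) : (seg f n).length = n := by
  simp [seg]

private lemma seg_getElem (f : ℕ → Bool) (n i : ℕ) (h : i < (seg f n).length) :
    (seg f n)[i] = f i := by
  simp [seg]

private lemma seg_prefix (f : ℕ → Bool) {m n : ℕ} (h : m ≤ n) : seg f m <+: seg f n := by
  have : seg f m = (seg f n).take m := by
    apply List.ext_getElem
    · simp [seg_length, h]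
    · intro i h1 h2
      rw [seg_getElem, List.getElem_take, seg_getElem]
  rw [this]
  exact List.take_prefix _ _

private lemma seg_eq_of_agree {f g : ℕ → Bool} {n : ℕ} (h : ∀ i < n, f i = g i) :
    seg f n = seg g n := by
  apply List.ext_getElem
  · simp [seg_length]
  · intro i h1 h2
    rw [seg_getElem, seg_getElem]
    exact h i (by simpa [seg_length] using h1)

/-- Key combinatorial fact: `φ (seg f n)` lies below some `φ (seg g m)` iff `f` and `g`
agree on the first `n` coordinates. -/
private lemma le_seg_iff_agree {T : Type*} [PartialOrder T]
    (φ : List Bool → T) (hφ : ∀ s t : List Bool, s <+: t ↔ φ s ≤ φ t)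
    {f g : ℕ → Bool} {n : ℕ} :
    (∃ m : ℕ, φ (seg f n) ≤ φ (seg g m)) ↔ ∀ i < n, f i = g i := by
  constructor
  · rintro ⟨m, hm⟩ i hi
    have hpre : seg f n <+: seg g m := (hφ _ _).2 hm
    have hlen : n ≤ m := by
      have := hpre.length_le; simpa [seg_length] using this
    have hi' : i < (seg f n).length := by simpa [seg_length] using hi
    have := hpre.getElem hi'
    rw [seg_getElem, seg_getElem] at this
    exact this
  · intro hag
    exact ⟨n, le_of_eq (congrArg φ (seg_eq_of_agree hag))⟩

/-- Cylinders are open in the Cantor space. -/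
private lemma cylinder_open (f : ℕ → Bool) (n : ℕ) :
    IsOpen {g : ℕ → Bool | ∀ i < n, g i = f i} := by
  have : {g : ℕ → Bool | ∀ i < n, g i = f i}
      = Set.pi (Set.Iio n) (fun i => {f i}) := by
    ext g; simp [Set.pi, Set.mem_Iio]
  rw [this]
  exact isOpen_set_pi (Set.finite_Iio n) (fun i _ => isOpen_discrete _)

/-- If a rooted tree `T` contains a subset order-isomorphic to the binary tree `2^{<ω}`
(via a map `φ` preserving and reflecting the orders), then the map sending `f ∈ 2^ω` to
the ray generated by the images of the initial segments of `f` is a topological embedding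
of the Cantor space `2^ω` into `R(T)`. -/
theorem cantor_embeds_in_rayspace {T : Type*} [PartialOrder T]
    (htree : IsOrderTree T) (r : T) (hroot : ∀ t : T, r ≤ t)
    (φ : List Bool → T) (hφ : ∀ s t : List Bool, s <+: t ↔ φ s ≤ φ t) :
    ∃ h : ∀ f : ℕ → Bool,
        IsRay {v : T | ∃ n : ℕ, v ≤ φ (List.ofFn fun i : Fin n => f i)},
      Topology.IsEmbedding (Y := RaySpace T)
        (fun f : ℕ → Bool =>
          (⟨{v : T | ∃ n : ℕ, v ≤ φ (List.ofFn fun i : Fin n => f i)}, h f⟩ : RaySpace T)) := by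
  -- basic monotonicity facts
  have hmono : ∀ (f : ℕ → Bool) {m n : ℕ}, m ≤ n → φ (seg f m) ≤ φ (seg f n) :=
    fun f m n h => (hφ _ _).1 (seg_prefix f h)
  have hstrict : ∀ (f : ℕ → Bool) (n : ℕ), φ (seg f n) < φ (seg f (n + 1)) := by
    intro f n
    refine lt_of_le_of_ne (hmono f (Nat.le_succ n)) ?_
    intro h
    have := (hφ (seg f (n + 1)) (seg f n)).2 h.symm.le
    have := this.length_le
    simp [seg_length] at this
  -- comparability in a tree
  have tcomp : ∀ {x y z : T}, x < z → y < z → x ≤ y ∨ y ≤ x := by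
    intro x y z hx hy
    rcases eq_or_ne x y with rfl | h
    · exact Or.inl le_rfl
    · exact (htree z).2 hx hy h
  -- the ray property
  have hray : ∀ f : ℕ → Bool,
      IsRay {v : T | ∃ n : ℕ, v ≤ φ (List.ofFn fun i : Fin n => f i)} := by
    intro f
    refine ⟨⟨r, 0, hroot _⟩, ?_, ?_, ?_⟩
    · rintro x ⟨m, hm⟩ y ⟨n, hn⟩ _
      rcases le_total m n with h | h
      · exact tcomp (lt_of_le_of_lt (hm.trans (hmono f h)) (hstrict f n))
          (lt_of_le_of_lt hn (hstrict f n))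
      · exact tcomp (lt_of_le_of_lt hm (hstrict f m))
          (lt_of_le_of_lt (hn.trans (hmono f h)) (hstrict f m))
    · rintro x ⟨n, hn⟩ y hyx
      exact ⟨n, hyx.trans hn⟩
    · rintro x ⟨n, hn⟩
      exact ⟨φ (seg f (n + 1)), ⟨n + 1, le_rfl⟩, lt_of_le_of_lt hn (hstrict f n)⟩
  refine ⟨hray, ?_⟩
  set ψ : (ℕ → Bool) → RaySpace T := fun f =>
    ⟨{v : T | ∃ n : ℕ, v ≤ φ (List.ofFn fun i : Fin n => f i)}, hray f⟩ with hψdef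
  -- basic membership
  have hmem : ∀ (f g : ℕ → Bool) (n : ℕ),
      φ (seg f n) ∈ (ψ g).val ↔ ∀ i < n, f i = g i := by
    intro f g n
    exact le_seg_iff_agree φ hφ
  -- injectivity
  have hinj : Function.Injective ψ := by
    intro f g hfg
    funext n
    have h1 : φ (seg f (n + 1)) ∈ (ψ f).val := ⟨n + 1, le_rfl⟩
    rw [hfg] at h1
    exact (hmem f g (n + 1)).1 h1 n (Nat.lt_succ_self n)
  -- each basic "membership" set is open in the ray space (subtype of Scott topology)
  have hVopen : ∀ t : T, IsOpen {X : RaySpace T | t ∈ X.val} := by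
    intro t
    exact TopologicalSpace.isOpen_generateFrom_of_mem ⟨t, Or.inl rfl⟩
  refine ⟨⟨?_⟩, hinj⟩
  refine le_antisymm ?_ ?_
  · -- continuity: the Cantor topology is finer than the induced one
    refine continuous_iff_le_induced.mp ?_
    refine continuous_generateFrom_iff.mpr ?_
    rintro u ⟨t, rfl | rfl⟩
    · rw [isOpen_iff_mem_nhds]
      rintro f ⟨n, hn⟩
      rw [mem_nhds_iff]
      refine ⟨{g | ∀ i < n, g i = f i}, ?_, cylinder_open f n, fun i _ => rfl⟩
      intro g hg
      have : seg f n = seg g n := seg_eq_of_agree (fun i hi => (hg i hi).symm)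
      refine ⟨n, ?_⟩
      show t ≤ φ (seg g n)
      rw [← this]
      exact hn
    · rw [isOpen_iff_mem_nhds]
      intro f hf
      have hf' : ∀ n, ¬ t ≤ φ (seg f n) := by
        intro n hn
        exact hf ⟨n, hn⟩
      rw [mem_nhds_iff]
      by_cases hc : ∃ n, ¬ φ (seg f n) < t
      · obtain ⟨n, hn⟩ := hc
        refine ⟨{g | ∀ i < n, g i = f i}, ?_, cylinder_open f n, fun i _ => rfl⟩
        rintro g hg ⟨m, hm⟩
        have hfg : seg f n = seg g n := seg_eq_of_agree (fun i hi => (hg i hi).symm)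
        have hm' : t ≤ φ (seg g (max m n)) := hm.trans (hmono g (le_max_left _ _))
        have hn' : φ (seg f n) ≤ φ (seg g (max m n)) := by
          rw [hfg]; exact hmono g (le_max_right _ _)
        rcases tcomp (lt_of_le_of_lt hm' (hstrict g _)) (lt_of_le_of_lt hn' (hstrict g _))
          with h | h
        · exact hf' n (h.trans (le_of_eq rfl))
        · exact hn (lt_of_le_of_ne h (fun he => hf' n he.ge))
      · push_neg at hc
        refine ⟨univ, ?_, isOpen_univ, trivial⟩
        rintro g - ⟨m, hm⟩
        have hpre : seg f m <+: seg g m := (hφ _ _).2 ((hc m).le.trans hm)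
        have heq : seg f m = seg g m := hpre.eq_of_length (by simp [seg_length])
        apply hf' m
        rw [heq]
        exact hm
  · -- the induced topology is finer than the Cantor topology
    rw [pi_eq_generateFrom]
    refine le_generateFrom ?_
    rintro s ⟨sets, is, hopen, rfl⟩
    -- a single open set of the ray space whose preimage is the basic open box
    refine isOpen_induced_iff.mpr
      ⟨⋂ a ∈ is, ⋃ b ∈ sets a, ⋃ f : {f : ℕ → Bool // f a = b},
          {X : RaySpace T | φ (seg f.val (a + 1)) ∈ X.val}, ?_, ?_⟩
    · exact Set.Finite.isOpen_biInter (Finset.finite_toSet is)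
        (fun a _ => isOpen_biUnion
          (fun b _ => isOpen_iUnion fun f => hVopen _))
    · ext g
      simp only [Set.preimage_iInter, Set.preimage_iUnion, Set.mem_iInter, Set.mem_iUnion,
        Set.mem_preimage, Set.mem_setOf_eq, Set.mem_pi, Finset.mem_coe]
      refine forall_congr' fun a => forall_congr' fun _ => ?_
      constructor
      · rintro ⟨b, hb, f, hf⟩
        have := (hmem f.val g (a + 1)).1 hf a (Nat.lt_succ_self a)
        exact (this.symm.trans f.property) ▸ hb
      · intro hg
        exact ⟨g a, hg, ⟨g, rfl⟩, (hmem g g (a + 1)).2 (fun i _ => rfl)⟩
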